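/- Let T be a tree with the interval topology. A subset X ⊆ T is a countable union of antichains if and only if X is a countable union of subsets each of which is closed and discrete in T. -/

import Mathlib

/-- A tree: a partial order in which the set of strict predecessors of every
element is well-ordered. -/
def IsTree (α : Type*) [PartialOrder α] : Prop :=
  ∀ t : α, IsWellOrder {s : α // s < t} (fun a b => (a : α) < b)

/-- The interval topology on a tree: generated by the half-open intervals
`(s, t]` together with the singletons of minimal elements. -/
def intervalTopology (α : Type*) [PartialOrder α] : TopologicalSpace α :=
  TopologicalSpace.generateFrom
    ({S | ∃ s t : α, s < t ∧ S = Set.Ioc s t} ∪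
      {S | ∃ m : α, (∀ x : α, ¬ x < m) ∧ S = {m}})

section Aux

variable {α : Type*} [PartialOrder α] [τ : TopologicalSpace α]

/-- In a tree, elements below a common element are comparable. -/
lemma tree_chain (htree : IsTree α) {x y z : α} (hy : y ≤ x) (hz : z ≤ x) :
    y ≤ z ∨ z ≤ y := by
  rcases eq_or_lt_of_le hy with rfl | hy'
  · exact Or.inr hz
  rcases eq_or_lt_of_le hz with rfl | hz'
  · exact Or.inl hy'.le
  rcases (open Classical in if h1 : y < z then Or.inl h1 else if h2 : z < y then Or.inr (Or.inr h2) else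
      Or.inr (Or.inl ((htree x).trichotomous ⟨y, hy'⟩ ⟨z, hz'⟩ h1 h2)) :
      y < z ∨ (⟨y, hy'⟩ : {s : α // s < x}) = ⟨z, hz'⟩ ∨ z < y) with h | h | h
  · exact Or.inl (le_of_lt h)
  · exact Or.inl (le_of_eq (congrArg Subtype.val h))
  · exact Or.inr (le_of_lt h)

lemma iopen_Ioc (hτ : τ = intervalTopology α) {s t : α} (h : s < t) :
    IsOpen (Set.Ioc s t) := by
  rw [hτ]
  exact TopologicalSpace.GenerateOpen.basic _ (Or.inl ⟨s, t, h, rfl⟩)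

lemma iopen_min (hτ : τ = intervalTopology α) {m : α} (h : ∀ x : α, ¬ x < m) :
    IsOpen ({m} : Set α) := by
  rw [hτ]
  exact TopologicalSpace.GenerateOpen.basic _ (Or.inr ⟨m, h, rfl⟩)

/-- Neighborhood basis at a point in the interval topology. -/
lemma nbhd_basis (hτ : τ = intervalTopology α) (htree : IsTree α)
    {U : Set α} {x : α} (hU : IsOpen U) (hx : x ∈ U) :
    (∀ y : α, ¬ y < x) ∨ ∃ s, s < x ∧ Set.Ioc s x ⊆ U := by
  rw [hτ] at hU
  change TopologicalSpace.GenerateOpen _ U at hU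
  revert hx
  induction hU with
  | basic S hS =>
    intro hx
    rcases hS with ⟨s, t, hst, rfl⟩ | ⟨m, hm, rfl⟩
    · exact Or.inr ⟨s, hx.1, fun z hz => ⟨hz.1, le_trans hz.2 hx.2⟩⟩
    · rcases hx with rfl; exact Or.inl hm
  | univ =>
    intro _
    by_cases h : ∃ s : α, s < x
    · exact Or.inr ⟨h.choose, h.choose_spec, Set.subset_univ _⟩
    · push_neg at h; exact Or.inl h
  | inter U V hUo hVo ihU ihV =>
    intro hx
    rcases ihU hx.1 with h | ⟨s, hs, hsub⟩
    · exact Or.inl h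
    rcases ihV hx.2 with h | ⟨t, ht, htub⟩
    · exact Or.inl h
    rcases tree_chain htree hs.le ht.le with h | h
    · exact Or.inr ⟨t, ht, fun z hz => ⟨hsub ⟨lt_of_le_of_lt h hz.1, hz.2⟩, htub hz⟩⟩
    · exact Or.inr ⟨s, hs, fun z hz => ⟨hsub hz, htub ⟨lt_of_le_of_lt h hz.1, hz.2⟩⟩⟩
  | sUnion S hS ih =>
    intro hx
    rcases hx with ⟨U, hUS, hxU⟩
    rcases ih U hUS hxU with h | ⟨s, hs, hsub⟩
    · exact Or.inl h
    · exact Or.inr ⟨s, hs, fun z hz => ⟨U, hUS, hsub hz⟩⟩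

/-- In a closed discrete subset of a tree (with the interval topology),
every point has only finitely many predecessors inside the set. -/
lemma below_finite (hτ : τ = intervalTopology α) (htree : IsTree α)
    {D : Set α} (hDc : IsClosed D) (hDd : DiscreteTopology D) (x : α) :
    {y | y ∈ D ∧ y < x}.Finite := by
  by_contra hfinC
  replace hfinC : {y | y ∈ D ∧ y < x}.Infinite := hfinC
  set C := {y | y ∈ D ∧ y < x} with hCdef
  obtain ⟨s, hsx, hsInf, hsMin⟩ :
      ∃ s, s ≤ x ∧ {y | y ∈ C ∧ y < s}.Infinite ∧
        ∀ t, t < s → {y | y ∈ C ∧ y < t}.Finite := by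
    by_cases hP : ∃ z : {s : α // s < x}, {y | y ∈ C ∧ y < z.1}.Infinite
    · obtain ⟨z0, hz0, hz0min⟩ :=
        (htree x).wf.has_min {z | {y | y ∈ C ∧ y < z.1}.Infinite} hP
      refine ⟨z0.1, z0.2.le, hz0, fun t ht => ?_⟩
      by_contra hfin
      replace hfin : {y | y ∈ C ∧ y < t}.Infinite := hfin
      exact hz0min ⟨t, ht.trans z0.2⟩ hfin ht
    · push_neg at hP
      refine ⟨x, le_rfl, ?_, fun t ht => ?_⟩
      · have : {y | y ∈ C ∧ y < x} = C := by
          ext y; exact ⟨fun h => h.1, fun h => ⟨h, h.2⟩⟩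
        rw [this]; exact hfinC
      · have := hP ⟨t, ht⟩
        exact this
  obtain ⟨y0, hy0C, hy0s⟩ := hsInf.nonempty
  have hkey : ∀ U : Set α, IsOpen U → s ∈ U → ∃ y, y ∈ U ∧ y ∈ D ∧ y ≠ s := by
    intro U hU hsU
    rcases nbhd_basis hτ htree hU hsU with h | ⟨t, hts, hsub⟩
    · exact absurd hy0s (h y0)
    · obtain ⟨y, hymem, hy'⟩ :=
        (hsInf.diff ((hsMin t hts).union (Set.finite_singleton t))).nonempty
      obtain ⟨hyC, hys⟩ := hymem
      have hyF : y ∉ {y | y ∈ C ∧ y < t} := fun h => hy' (Or.inl h)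
      have hyt : y ≠ t := fun h => hy' (Or.inr h)
      have hty : t < y := by
        rcases tree_chain htree hys.le hts.le with h | h
        · rcases lt_or_eq_of_le h with h' | h'
          · exact absurd ⟨hyC, h'⟩ hyF
          · exact absurd h' hyt
        · rcases lt_or_eq_of_le h with h' | h'
          · exact h'
          · exact absurd h'.symm hyt
      exact ⟨y, hsub ⟨hty, hys.le⟩, hyC.1, ne_of_lt hys⟩
  have hsD : s ∈ D := by
    rw [← hDc.closure_eq, mem_closure_iff]
    intro o ho hso
    obtain ⟨y, hyU, hyD, _⟩ := hkey o ho hso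
    exact ⟨y, hyU, hyD⟩
  have hopen : IsOpen ({⟨s, hsD⟩} : Set D) := isOpen_discrete _
  rw [isOpen_induced_iff] at hopen
  obtain ⟨U, hU, hUeq⟩ := hopen
  have hsU : s ∈ U := by
    have h1 : (⟨s, hsD⟩ : D) ∈ (Subtype.val ⁻¹' U : Set D) := by
      rw [hUeq]; rfl
    exact h1
  obtain ⟨y, hyU, hyD, hys⟩ := hkey U hU hsU
  have h2 : (⟨y, hyD⟩ : D) ∈ (Subtype.val ⁻¹' U : Set D) := hyU
  rw [hUeq] at h2
  exact hys (congrArg Subtype.val h2)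

/-- Antichains are closed and discrete in the interval topology. -/
lemma antichain_closed_discrete (hτ : τ = intervalTopology α) (htree : IsTree α)
    {A : Set α} (hA : IsAntichain (· ≤ ·) A) :
    IsClosed A ∧ DiscreteTopology A := by
  constructor
  · rw [← isOpen_compl_iff, isOpen_iff_forall_mem_open]
    intro x hx
    by_cases hmin : ∀ y : α, ¬ y < x
    · refine ⟨{x}, ?_, iopen_min hτ hmin, rfl⟩
      intro z hz; rcases hz with rfl; exact hx
    push_neg at hmin
    obtain ⟨t0, ht0⟩ := hmin
    by_cases hB : ∃ y, y ∈ A ∧ y ≤ x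
    · obtain ⟨y, hyA, hyx⟩ := hB
      have hylt : y < x := lt_of_le_of_ne hyx (fun h => hx (h ▸ hyA))
      refine ⟨Set.Ioc y x, ?_, iopen_Ioc hτ hylt, ⟨hylt, le_rfl⟩⟩
      intro z hz hzA
      exact hA hyA hzA (ne_of_lt hz.1) hz.1.le
    · push_neg at hB
      refine ⟨Set.Ioc t0 x, ?_, iopen_Ioc hτ ht0, ⟨ht0, le_rfl⟩⟩
      intro z hz hzA
      exact hB z hzA hz.2
  · rw [discreteTopology_iff_isOpen_singleton]
    rintro ⟨x, hxA⟩
    rw [isOpen_induced_iff]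
    by_cases hmin : ∀ y : α, ¬ y < x
    · refine ⟨{x}, iopen_min hτ hmin, ?_⟩
      ext ⟨z, hzA⟩
      simp [Subtype.ext_iff]
    · push_neg at hmin
      obtain ⟨t0, ht0⟩ := hmin
      refine ⟨Set.Ioc t0 x, iopen_Ioc hτ ht0, ?_⟩
      ext ⟨z, hzA⟩
      simp only [Set.mem_preimage, Set.mem_singleton_iff, Subtype.ext_iff, Set.mem_Ioc]
      constructor
      · rintro ⟨h1, h2⟩
        by_contra hne
        exact hA hzA hxA hne h2
      · rintro rfl
        exact ⟨ht0, le_rfl⟩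

end Aux

theorem stmt_6 {α : Type*} [PartialOrder α] [τ : TopologicalSpace α]
    (hτ : τ = intervalTopology α) (htree : IsTree α)
    (hsup : ∀ C : Set α, C.Nonempty → IsChain (· ≤ ·) C →
      (∃ b, b ∈ upperBounds C) → ∃ s, IsLUB C s)
    (X : Set α) :
    (∃ A : ℕ → Set α, (∀ n, IsAntichain (· ≤ ·) (A n)) ∧ X = ⋃ n, A n) ↔
      (∃ D : ℕ → Set α, (∀ n, IsClosed (D n) ∧ DiscreteTopology (D n)) ∧
        X = ⋃ n, D n) := by
  constructor
  · rintro ⟨A, hA, rfl⟩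
    exact ⟨A, fun n => antichain_closed_discrete hτ htree (hA n), rfl⟩
  · rintro ⟨D, hD, rfl⟩
    have hfin : ∀ (n : ℕ) (x : α), {y | y ∈ D n ∧ y < x}.Finite :=
      fun n x => below_finite hτ htree (hD n).1 (hD n).2 x
    set e : ℕ ≃ ℕ × ℕ := (Denumerable.eqv (ℕ × ℕ)).symm with he
    set B : ℕ × ℕ → Set α :=
      fun p => {x | x ∈ D p.1 ∧ {y | y ∈ D p.1 ∧ y < x}.ncard = p.2} with hB
    refine ⟨fun m => B (e m), fun m => ?_, ?_⟩
    · intro x hx y hy hne hle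
      have hlt : x < y := lt_of_le_of_ne hle hne
      have hsub : {z | z ∈ D (e m).1 ∧ z < x} ⊂ {z | z ∈ D (e m).1 ∧ z < y} := by
        constructor
        · rintro z ⟨hz, hzx⟩; exact ⟨hz, hzx.trans hlt⟩
        · intro hsub'
          have hxx : x ∈ {z | z ∈ D (e m).1 ∧ z < x} := hsub' ⟨hx.1, hlt⟩
          exact lt_irrefl x hxx.2
      have hcard := Set.ncard_lt_ncard hsub (hfin _ _)
      rw [hx.2, hy.2] at hcard
      exact lt_irrefl _ hcard
    · ext x
      simp only [Set.mem_iUnion]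
      constructor
      · rintro ⟨n, hn⟩
        refine ⟨e.symm (n, {y | y ∈ D n ∧ y < x}.ncard), ?_⟩
        show x ∈ B (e (e.symm _))
        rw [Equiv.apply_symm_apply]
        exact ⟨hn, rfl⟩
      · rintro ⟨m, hm⟩
        exact ⟨(e m).1, hm.1⟩
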